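/- Let G be a finite group. If {x_1, x_2, …, x_t} is a maximal clique of the reduced graph ℛ_{𝒫_E(G)} of the enhanced power graph of G, then ⋃_{i=1}^{t} x̄_i is a maximal cyclic subgroup of G, where x̄_i is the ≡-class of x_i. -/

import Mathlib

/-- The closed neighborhood of a vertex `x` in a simple graph. -/
def closedNbhd {V : Type*} (Γ : SimpleGraph V) (x : V) : Set V :=
  insert x (Γ.neighborSet x)

/-- `z` strongly resolves `x` and `y` if some shortest path from `z` to `x`
contains `y`, or some shortest path from `z` to `y` contains `x`. -/
def StronglyResolves {V : Type*} (Γ : SimpleGraph V) (z x y : V) : Prop :=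
  (∃ w : Γ.Walk z x, w.IsPath ∧ w.length = Γ.dist z x ∧ y ∈ w.support) ∨
  (∃ w : Γ.Walk z y, w.IsPath ∧ w.length = Γ.dist z y ∧ x ∈ w.support)

/-- `S` is a strong resolving set if every pair of distinct vertices is
strongly resolved by some vertex of `S`. -/
def IsStrongResolvingSet {V : Type*} (Γ : SimpleGraph V) (S : Set V) : Prop :=
  ∀ x y : V, x ≠ y → ∃ z ∈ S, StronglyResolves Γ z x y

/-- The strong metric dimension: the minimum size of a strong resolving set. -/
noncomputable def sdim {V : Type*} [Fintype V] (Γ : SimpleGraph V) : ℕ :=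
  sInf {k | ∃ S : Finset V, S.card = k ∧ IsStrongResolvingSet Γ ↑S}

/-- The equivalence relation `x ≈ y` iff `N[x] = N[y]`. -/
def nbhdSetoid {V : Type*} (Γ : SimpleGraph V) : Setoid V :=
  ⟨fun x y => closedNbhd Γ x = closedNbhd Γ y,
   ⟨fun _ => rfl, Eq.symm, Eq.trans⟩⟩

/-- The reduced graph `ℛ_Γ`: vertices are the `≈`-classes, two distinct classes
being adjacent iff some (equivalently, any) pair of their members is adjacent in `Γ`. -/
def reducedGraph {V : Type*} (Γ : SimpleGraph V) :
    SimpleGraph (Quotient (nbhdSetoid Γ)) where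
  Adj a b := a ≠ b ∧ ∃ x y : V,
    Quotient.mk (nbhdSetoid Γ) x = a ∧ Quotient.mk (nbhdSetoid Γ) y = b ∧ Γ.Adj x y
  symm := ⟨by rintro a b ⟨h, x, y, hx, hy, hadj⟩; exact ⟨h.symm, y, x, hy, hx, hadj.symm⟩⟩
  loopless := ⟨by rintro a ⟨h, -⟩; exact h rfl⟩

/-- The order supergraph `𝒮(G)`: distinct `x, y` are adjacent iff
`o(x) ∣ o(y)` or `o(y) ∣ o(x)`. -/
def orderSupergraph (G : Type*) [Group G] : SimpleGraph G where
  Adj x y := x ≠ y ∧ (orderOf x ∣ orderOf y ∨ orderOf y ∣ orderOf x)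
  symm := ⟨by rintro x y ⟨h, h2⟩; exact ⟨h.symm, h2.symm⟩⟩
  loopless := ⟨by rintro x ⟨h, -⟩; exact h rfl⟩

/-- The enhanced power graph `𝒫_E(G)`: distinct `x, y` are adjacent iff
`⟨x, y⟩` is cyclic. -/
def enhancedPowerGraph (G : Type*) [Group G] : SimpleGraph G where
  Adj x y := x ≠ y ∧ IsCyclic (Subgroup.closure ({x, y} : Set G))
  symm := ⟨by rintro x y ⟨h, h2⟩; rw [Set.pair_comm] at h2; exact ⟨h.symm, h2⟩⟩
  loopless := ⟨by rintro x ⟨h, -⟩; exact h rfl⟩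

/-- The reduced power graph `𝒫_R(G)`: distinct `x, y` are adjacent iff
`⟨x⟩ ⊂ ⟨y⟩` or `⟨y⟩ ⊂ ⟨x⟩`. -/
def reducedPowerGraph (G : Type*) [Group G] : SimpleGraph G where
  Adj x y := Subgroup.zpowers x < Subgroup.zpowers y ∨ Subgroup.zpowers y < Subgroup.zpowers x
  symm := ⟨by rintro x y h; exact Or.symm h⟩
  loopless := ⟨by rintro x h; rcases h with h | h <;> exact lt_irrefl _ h⟩

/-- `Ω n`: the number of prime factors of `n` counted with multiplicity. -/
def bigOmega (n : ℕ) : ℕ := n.primeFactorsList.length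

/-- A maximal cyclic subgroup: a cyclic subgroup not properly contained in any
cyclic subgroup. -/
def IsMaxCyclic {G : Type*} [Group G] (M : Subgroup G) : Prop :=
  IsCyclic M ∧ ∀ N : Subgroup G, IsCyclic N → M ≤ N → M = N

/-- `ℳ_g`: the set of maximal cyclic subgroups containing `g`. -/
def maxCyclicOn {G : Type*} [Group G] (g : G) : Set (Subgroup G) :=
  {M | IsMaxCyclic M ∧ g ∈ M}


section AuxLemmas
open Subgroup

open Subgroup

variable {G : Type*} [Group G]

lemma isCyclic_zpowers (c : G) : IsCyclic ↥(zpowers c) := by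
  refine ⟨⟨c, mem_zpowers c⟩, fun x => ?_⟩
  obtain ⟨k, hk⟩ := x.2
  exact ⟨k, Subtype.ext (by simpa using hk)⟩

/-- Lemma E -/
lemma exists_zpowers_eq {H : Subgroup G} (h : IsCyclic ↥H) : ∃ c : G, H = zpowers c := by
  obtain ⟨⟨c, hc⟩, hgen⟩ := h
  refine ⟨c, le_antisymm ?_ ((zpowers_le).2 hc)⟩
  intro x hx
  obtain ⟨k, hk⟩ := hgen ⟨x, hx⟩
  exact ⟨k, by simpa using congrArg (Subtype.val) hk⟩

/-- L10 -/
lemma isCyclic_of_le_zpowers {K : Subgroup G} {c : G} (h : K ≤ zpowers c) : IsCyclic ↥K := by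
  have : IsCyclic ↥(zpowers c) := _root_.isCyclic_zpowers c
  have : IsCyclic ↥(K.subgroupOf (zpowers c)) := Subgroup.isCyclic _
  exact isCyclic_of_surjective (Subgroup.subgroupOfEquivOfLe h).toMonoidHom
    (Subgroup.subgroupOfEquivOfLe h).surjective

/-- commuting of elements of zpowers -/
lemma commute_of_mem_zpowers {c x y : G} (hx : x ∈ zpowers c) (hy : y ∈ zpowers c) :
    Commute x y := by
  obtain ⟨i, rfl⟩ := hx
  obtain ⟨j, rfl⟩ := hy
  exact Commute.zpow_zpow_self c i j



/-- Lemma D -/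
lemma mem_zpowers_of_orderOf_dvd [Finite G] {g x y : G} (hx : x ∈ zpowers g)
    (hy : y ∈ zpowers g) (h : orderOf x ∣ orderOf y) : x ∈ zpowers y := by
  rw [← mem_powers_iff_mem_zpowers, Submonoid.mem_powers_iff] at hx hy
  obtain ⟨i, rfl⟩ := hx
  obtain ⟨j, rfl⟩ := hy
  set n := orderOf g with hn
  have npos : 0 < n := orderOf_pos g
  rw [orderOf_pow, orderOf_pow, ← hn] at h
  -- h : n / gcd n i ∣ n / gcd n j
  have d1pos : 0 < Nat.gcd n i := Nat.gcd_pos_of_pos_left i npos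
  have d2pos : 0 < Nat.gcd n j := Nat.gcd_pos_of_pos_left j npos
  obtain ⟨k, hk⟩ := h
  have h1 : n / Nat.gcd n i * Nat.gcd n i = n := Nat.div_mul_cancel (Nat.gcd_dvd_left n i)
  have h2 : n / Nat.gcd n j * Nat.gcd n j = n := Nat.div_mul_cancel (Nat.gcd_dvd_left n j)
  have hq : 0 < n / Nat.gcd n i := Nat.div_pos (Nat.le_of_dvd npos (Nat.gcd_dvd_left n i)) d1pos
  have hd21 : Nat.gcd n j ∣ Nat.gcd n i := by
    refine ⟨k, ?_⟩
    have : n / Nat.gcd n i * Nat.gcd n i = n / Nat.gcd n i * (Nat.gcd n j * k) := by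
      rw [h1, show n / Nat.gcd n i * (Nat.gcd n j * k) = n / Nat.gcd n i * k * Nat.gcd n j from by ring, ← hk, h2]
    exact Nat.eq_of_mul_eq_mul_left hq this
  have hdi : Nat.gcd n j ∣ i := hd21.trans (Nat.gcd_dvd_right n i)
  obtain ⟨w, hw⟩ := hdi
  refine ⟨(n.gcdB j) * w, ?_⟩
  have hbez : (Nat.gcd n j : ℤ) = n * n.gcdA j + j * n.gcdB j := Nat.gcd_eq_gcd_ab n j
  have hgn : (g : G) ^ (n : ℤ) = 1 := by
    rw [zpow_natCast, pow_orderOf_eq_one]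
  calc (g ^ j) ^ ((n.gcdB j) * w)
      = g ^ ((j : ℤ) * ((n.gcdB j) * w)) := by rw [← zpow_natCast g j, ← zpow_mul]
    _ = g ^ ((n : ℤ) * (n.gcdA j * w)) * g ^ ((j : ℤ) * ((n.gcdB j) * w)) := by
        rw [zpow_mul g (n : ℤ), hgn, one_zpow, one_mul]
    _ = g ^ ((i : ℤ)) := by
        rw [← zpow_add]
        congr 1
        have : (i : ℤ) = (Nat.gcd n j : ℤ) * w := by exact_mod_cast hw
        rw [this, hbez]; ring
    _ = g ^ i := zpow_natCast g i


/-- L5 -/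
lemma mem_zpowers_mul_of_coprime [Finite G] {x y : G} (h : Commute x y)
    (hc : Nat.Coprime (orderOf x) (orderOf y)) :
    x ∈ zpowers (x * y) ∧ y ∈ zpowers (x * y) := by
  set m := orderOf x with hm
  set n := orderOf y with hn
  have hbez : (1 : ℤ) = m * m.gcdA n + n * m.gcdB n := by
    have := Nat.gcd_eq_gcd_ab m n
    rwa [Nat.Coprime.gcd_eq_one hc, Nat.cast_one] at this
  have hx : x ∈ zpowers (x * y) := by
    refine ⟨(n : ℤ) * m.gcdB n, ?_⟩
    show (x * y) ^ ((n : ℤ) * m.gcdB n) = x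
    rw [h.mul_zpow]
    have hxn : x ^ ((n : ℤ) * m.gcdB n) = x := by
      have : x ^ ((n : ℤ) * m.gcdB n) = x ^ (1 : ℤ) * (x ^ (m : ℤ)) ^ (-(m.gcdA n)) := by
        rw [← zpow_mul, ← zpow_add]
        congr 1
        rw [hbez]; ring
      rw [this, zpow_natCast, pow_orderOf_eq_one, one_zpow, mul_one, zpow_one]
    have hyn : y ^ ((n : ℤ) * m.gcdB n) = 1 := by
      rw [zpow_mul, zpow_natCast, pow_orderOf_eq_one, one_zpow]
    rw [hxn, hyn, mul_one]
  refine ⟨hx, ?_⟩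
  simpa [inv_mul_cancel_left] using mul_mem (inv_mem hx) (mem_zpowers (x * y))


/-- L8 -/
lemma orderOf_pow_ordCompl [Finite G] (x : G) (p : ℕ) :
    orderOf (x ^ (orderOf x / p ^ (orderOf x).factorization p))
      = p ^ (orderOf x).factorization p := by
  have hn : orderOf x ≠ 0 := (orderOf_pos x).ne'
  rw [orderOf_pow, Nat.gcd_eq_right (Nat.ordCompl_dvd (orderOf x) p)]
  exact Nat.div_div_self (Nat.ordProj_dvd (orderOf x) p) hn

/-- L7, list version -/
lemma primePow_prod_mem [Finite G] : ∀ (l : List ℕ) (b : ℕ → G), l.Nodup →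
    (∀ p ∈ l, Nat.Prime p) → (∀ p ∈ l, ∀ q ∈ l, Commute (b p) (b q)) →
    (∀ p ∈ l, ∃ k, orderOf (b p) = p ^ k) →
    (orderOf (l.map b).prod ∣ (l.map fun p => orderOf (b p)).prod) ∧
      ∀ q ∈ l, b q ∈ zpowers (l.map b).prod := by
  intro l
  induction l with
  | nil => simp
  | cons a s ih =>
    intro b hnd hp hcomm hord
    have hnd' : s.Nodup := (List.nodup_cons.1 hnd).2
    have ha : a ∉ s := (List.nodup_cons.1 hnd).1
    have hp' : ∀ p ∈ s, Nat.Prime p := fun p hps => hp p (List.mem_cons_of_mem a hps)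
    have hcomm' : ∀ p ∈ s, ∀ q ∈ s, Commute (b p) (b q) := fun p hps q hqs =>
      hcomm p (List.mem_cons_of_mem a hps) q (List.mem_cons_of_mem a hqs)
    have hord' : ∀ p ∈ s, ∃ k, orderOf (b p) = p ^ k := fun p hps =>
      hord p (List.mem_cons_of_mem a hps)
    obtain ⟨ihdvd, ihmem⟩ := ih b hnd' hp' hcomm' hord'
    have hmema : a ∈ a :: s := List.mem_cons_self
    have hcaP : Commute (b a) (s.map b).prod := by
      refine Commute.list_prod_right _ _ fun x hx => ?_
      obtain ⟨q, hqs, rfl⟩ := List.mem_map.1 hx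
      exact hcomm a hmema q (List.mem_cons_of_mem a hqs)
    rw [List.map_cons, List.map_cons, List.prod_cons, List.prod_cons]
    have hdvd : orderOf (b a * (s.map b).prod) ∣ orderOf (b a) * (s.map fun p => orderOf (b p)).prod :=
      dvd_trans hcaP.orderOf_mul_dvd_mul_orderOf (mul_dvd_mul_left (orderOf (b a)) ihdvd)
    refine ⟨hdvd, ?_⟩
    obtain ⟨k, hk⟩ := hord a hmema
    have hpa : Nat.Prime a := hp a hmema
    have hcop : Nat.Coprime (orderOf (b a)) (orderOf (s.map b).prod) := by
      have h1 : Nat.Coprime (orderOf (b a)) (s.map fun p => orderOf (b p)).prod := by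
        refine Nat.coprime_list_prod_right_iff.2 fun n hn => ?_
        obtain ⟨q, hqs, rfl⟩ := List.mem_map.1 hn
        obtain ⟨kq, hkq⟩ := hord' q hqs
        rw [hk, hkq]
        exact Nat.Coprime.pow k kq
          ((Nat.coprime_primes hpa (hp' q hqs)).2 fun hEq => ha (hEq ▸ hqs))
      exact Nat.Coprime.coprime_dvd_right ihdvd h1
    obtain ⟨hma, hmP⟩ := mem_zpowers_mul_of_coprime hcaP hcop
    intro q hq
    rcases List.mem_cons.1 hq with rfl | hqs
    · exact hma
    · exact (zpowers_le.2 hmP) (ihmem q hqs)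
/-- Lemma F -/
lemma mem_of_primePow_powers_mem [Finite G] (H : Subgroup G) :
    ∀ x : G, (∀ y ∈ zpowers x, (∃ p k, Nat.Prime p ∧ orderOf y = p ^ k) → y ∈ H) → x ∈ H := by
  suffices key : ∀ (n : ℕ) (x : G), orderOf x = n →
      (∀ y ∈ zpowers x, (∃ p k, Nat.Prime p ∧ orderOf y = p ^ k) → y ∈ H) → x ∈ H by
    exact fun x hx => key (orderOf x) x rfl hx
  intro n
  induction n using Nat.strong_induction_on with
  | _ n ih =>
    intro x hxn hyp
    have hn0 : n ≠ 0 := hxn ▸ (orderOf_pos x).ne'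
    by_cases hn1 : n = 1
    · have : x = 1 := orderOf_eq_one_iff.1 (by rw [hxn, hn1])
      rw [this]; exact H.one_mem
    set p := n.minFac with hpdef
    have hp : p.Prime := Nat.minFac_prime hn1
    set α := n.factorization p with hαdef
    set m := n / p ^ α with hmdef
    have hpd : p ∣ n := Nat.minFac_dvd n
    have hα : 0 < α := hp.factorization_pos_of_dvd hn0 hpd
    have hproj : p ^ α ∣ n := Nat.ordProj_dvd n p
    have hprojgt : 1 < p ^ α := Nat.one_lt_pow hα.ne' hp.one_lt
    have hself : p ^ α * m = n := Nat.ordProj_mul_ordCompl_eq_self n p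
    by_cases hm1 : m = 1
    · refine hyp x (mem_zpowers x) ⟨p, α, hp, ?_⟩
      rw [hxn, ← hself, hm1, mul_one]
    · have hmdvd : m ∣ n := Nat.ordCompl_dvd n p
      have hmpos : 0 < m := Nat.ordCompl_pos p hn0
      have hmlt : m < n := Nat.div_lt_self (Nat.pos_of_ne_zero hn0) hprojgt
      have h1 : orderOf (x ^ p ^ α) = m := by
        rw [orderOf_pow, hxn, Nat.gcd_eq_right hproj]
      have hx1 : x ^ p ^ α ∈ H := by
        refine ih m hmlt (x ^ p ^ α) h1 fun y hy hyp2 => hyp y ?_ hyp2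
        exact (zpowers_le.2 (pow_mem (mem_zpowers x) _)) hy
      have hx2 : x ^ m ∈ H := by
        refine hyp (x ^ m) (pow_mem (mem_zpowers x) _) ⟨p, α, hp, ?_⟩
        rw [orderOf_pow, hxn, Nat.gcd_eq_right hmdvd]
        exact Nat.div_div_self hproj hn0
      have hcop : Nat.Coprime (p ^ α) m := (Nat.coprime_ordCompl hp hn0).pow_left α
      have hbez : (1 : ℤ) = (p ^ α : ℕ) * Nat.gcdA (p ^ α) m + (m : ℕ) * Nat.gcdB (p ^ α) m := by
        have h := Nat.gcd_eq_gcd_ab (p ^ α) m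
        rwa [Nat.Coprime.gcd_eq_one hcop, Nat.cast_one] at h
      have hxeq : x = (x ^ p ^ α) ^ Nat.gcdA (p ^ α) m * (x ^ m) ^ Nat.gcdB (p ^ α) m := by
        rw [← zpow_natCast x (p ^ α), ← zpow_natCast x m, ← zpow_mul, ← zpow_mul, ← zpow_add]
        nth_rewrite 1 [← zpow_one x]
        rw [hbez]
      rw [hxeq]
      exact H.mul_mem (H.zpow_mem hx1 _) (H.zpow_mem hx2 _)
/-- Lemma C: a finite set in which every pair lies in a common cyclic subgroup
lies in a single cyclic subgroup. -/
lemma exists_zpowers_superset [Finite G] (T : Finset G)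
    (hT : ∀ x ∈ T, ∀ y ∈ T, ∃ c : G, x ∈ zpowers c ∧ y ∈ zpowers c) :
    ∃ g : G, ∀ t ∈ T, t ∈ zpowers g := by
  classical
  set PF := T.biUnion (fun t => (orderOf t).primeFactors) with hPF
  have hex : ∀ p, p ∈ PF → ∃ t, t ∈ T ∧
      ∀ t' ∈ T, (orderOf t').factorization p ≤ (orderOf t).factorization p := by
    intro p hp
    obtain ⟨t, htT, -⟩ := Finset.mem_biUnion.1 hp
    obtain ⟨t1, ht1, hmax⟩ := T.exists_max_image (fun t => (orderOf t).factorization p) ⟨t, htT⟩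
    exact ⟨t1, ht1, hmax⟩
  set t0 : ℕ → G := fun p => if h : p ∈ PF then (hex p h).choose else 1 with ht0def
  have ht0T : ∀ p ∈ PF, t0 p ∈ T := by
    intro p hp; rw [ht0def]; simp only [dif_pos hp]; exact (hex p hp).choose_spec.1
  have ht0max : ∀ p ∈ PF, ∀ t' ∈ T,
      (orderOf t').factorization p ≤ (orderOf (t0 p)).factorization p := by
    intro p hp; rw [ht0def]; simp only [dif_pos hp]; exact (hex p hp).choose_spec.2
  set b : ℕ → G := fun p =>
    (t0 p) ^ (orderOf (t0 p) / p ^ ((orderOf (t0 p)).factorization p)) with hbdef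
  have hordb : ∀ p, orderOf (b p) = p ^ ((orderOf (t0 p)).factorization p) := fun p =>
    orderOf_pow_ordCompl (t0 p) p
  have hbt : ∀ p, b p ∈ zpowers (t0 p) := fun p => pow_mem (mem_zpowers _) _
  have hPFprime : ∀ p ∈ PF, Nat.Prime p := by
    intro p hp
    obtain ⟨t, -, hpt⟩ := Finset.mem_biUnion.1 hp
    exact Nat.prime_of_mem_primeFactors hpt
  set l := PF.toList with hldef
  have hlmem : ∀ p, p ∈ l ↔ p ∈ PF := fun p => Finset.mem_toList
  obtain ⟨-, hmem⟩ := primePow_prod_mem l b (Finset.nodup_toList PF)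
    (fun p hp => hPFprime p ((hlmem p).1 hp))
    (by
      intro p hp q hq
      obtain ⟨c, hc1, hc2⟩ := hT (t0 p) (ht0T p ((hlmem p).1 hp)) (t0 q) (ht0T q ((hlmem q).1 hq))
      exact commute_of_mem_zpowers ((zpowers_le.2 hc1) (hbt p)) ((zpowers_le.2 hc2) (hbt q)))
    (fun p _ => ⟨(orderOf (t0 p)).factorization p, hordb p⟩)
  refine ⟨(l.map b).prod, fun t htT => ?_⟩
  refine mem_of_primePow_powers_mem _ t fun y hy hyp => ?_
  obtain ⟨p, k, hp, hordy⟩ := hyp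
  by_cases hy1 : orderOf y = 1
  · rw [orderOf_eq_one_iff.1 hy1]; exact one_mem _
  have hk0 : k ≠ 0 := by rintro rfl; rw [pow_zero] at hordy; exact hy1 hordy
  have hordt0 : orderOf t ≠ 0 := (orderOf_pos t).ne'
  have hydvdt : orderOf y ∣ orderOf t := orderOf_dvd_of_mem_zpowers hy
  have hpdvd : p ∣ orderOf t := dvd_trans (dvd_trans (dvd_pow_self p hk0) (hordy ▸ dvd_refl _)) hydvdt
  have hpPF : p ∈ PF := Finset.mem_biUnion.2 ⟨t, htT, Nat.mem_primeFactors.2 ⟨hp, hpdvd, hordt0⟩⟩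
  -- order of y divides order of b p
  have hk_le : k ≤ (orderOf (t0 p)).factorization p := by
    have h1 : p ^ k ∣ orderOf t := hordy ▸ hydvdt
    have h2 : k ≤ (orderOf t).factorization p :=
      (Nat.Prime.pow_dvd_iff_le_factorization hp hordt0).1 h1
    exact le_trans h2 (ht0max p hpPF t htT)
  have hdvd : orderOf y ∣ orderOf (b p) := by
    rw [hordy, hordb p]
    exact pow_dvd_pow p hk_le
  -- common cyclic group containing y and b p
  obtain ⟨c, hc1, hc2⟩ := hT t htT (t0 p) (ht0T p hpPF)
  have hyc : y ∈ zpowers c := (zpowers_le.2 hc1) hy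
  have hbc : b p ∈ zpowers c := (zpowers_le.2 hc2) (hbt p)
  have hybp : y ∈ zpowers (b p) := mem_zpowers_of_orderOf_dvd hyc hbc hdvd
  exact (zpowers_le.2 (hmem p ((hlmem p).2 hpPF))) hybp

end AuxLemmas

/-- Lemma 4.3: if `{x_1, …, x_t}` is a maximal clique of the reduced graph
`ℛ_{𝒫_E(G)}`, then the union of the `≡`-classes of the `x_i` is a maximal cyclic
subgroup of `G`. -/
theorem union_equivClasses_maximal_reduced_clique (G : Type*) [Group G] [Fintype G]
    (S : Finset G)
    (hadj : ∀ x ∈ S, ∀ y ∈ S, x ≠ y → (enhancedPowerGraph G).Adj x y)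
    (hcls : ∀ x ∈ S, ∀ y ∈ S, x ≠ y →
      closedNbhd (enhancedPowerGraph G) x ≠ closedNbhd (enhancedPowerGraph G) y)
    (hmax : ¬∃ z : G,
      (∀ x ∈ S, closedNbhd (enhancedPowerGraph G) z ≠ closedNbhd (enhancedPowerGraph G) x) ∧
      ∀ x ∈ S, (enhancedPowerGraph G).Adj z x) :
    ∃ M : Subgroup G, IsMaxCyclic M ∧
      (⋃ x ∈ (S : Set G),
        {z : G | closedNbhd (enhancedPowerGraph G) z = closedNbhd (enhancedPowerGraph G) x})
        = (M : Set G) := by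
  classical
  set Γ := enhancedPowerGraph G with hΓ
  set U : Set G := ⋃ x ∈ (S : Set G), {z : G | closedNbhd Γ z = closedNbhd Γ x} with hU
  have hmemN : ∀ z x : G, z ∈ closedNbhd Γ x ↔ z = x ∨ Γ.Adj x z := by
    intro z x
    simp [closedNbhd, SimpleGraph.mem_neighborSet]
  have hself : ∀ x : G, x ∈ closedNbhd Γ x := fun x => (hmemN x x).2 (Or.inl rfl)
  have hUmem : ∀ z : G, z ∈ U ↔ ∃ x ∈ S, closedNbhd Γ z = closedNbhd Γ x := by
    intro z
    rw [hU]
    simp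
  have hSU : ∀ x ∈ S, x ∈ U := fun x hx => (hUmem x).2 ⟨x, hx, rfl⟩
  -- every pair of elements of U lies in a common cyclic subgroup
  have hpair : ∀ z ∈ U, ∀ w ∈ U, ∃ c : G, z ∈ Subgroup.zpowers c ∧ w ∈ Subgroup.zpowers c := by
    intro z hz w hw
    rcases eq_or_ne z w with rfl | hzw
    · exact ⟨z, Subgroup.mem_zpowers z, Subgroup.mem_zpowers z⟩
    · have hAdj : Γ.Adj z w := by
        obtain ⟨x, hxS, hNx⟩ := (hUmem z).1 hz
        obtain ⟨y, hyS, hNy⟩ := (hUmem w).1 hw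
        have hwNz : w ∈ closedNbhd Γ z := by
          rcases eq_or_ne x y with rfl | hxy
          · rw [hNx, ← hNy]
            exact hself w
          · have hxy' : Γ.Adj x y := hadj x hxS y hyS hxy
            have hxNw : x ∈ closedNbhd Γ w := by
              rw [hNy]
              exact (hmemN x y).2 (Or.inr hxy'.symm)
            have hwNx : w ∈ closedNbhd Γ x := by
              rcases (hmemN x w).1 hxNw with rfl | hAdjwx
              · exact hself x
              · exact (hmemN w x).2 (Or.inr hAdjwx.symm)
            rw [hNx]
            exact hwNx
        rcases (hmemN w z).1 hwNz with rfl | h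
        · exact absurd rfl hzw
        · exact h
      obtain ⟨hne, hcyc⟩ := hAdj
      obtain ⟨c, hc⟩ := exists_zpowers_eq hcyc
      refine ⟨c, ?_, ?_⟩
      · rw [← hc]
        exact Subgroup.subset_closure (Set.mem_insert z {w})
      · rw [← hc]
        exact Subgroup.subset_closure (Set.mem_insert_of_mem z rfl)
  -- U is contained in a cyclic subgroup
  have hUfin : U.Finite := Set.toFinite U
  obtain ⟨g, hg⟩ := exists_zpowers_superset hUfin.toFinset
    (by
      intro x hx y hy
      exact hpair x (hUfin.mem_toFinset.1 hx) y (hUfin.mem_toFinset.1 hy))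
  have hUg : ∀ z ∈ U, z ∈ Subgroup.zpowers g := fun z hz => hg z (hUfin.mem_toFinset.2 hz)
  -- a maximal cyclic subgroup containing zpowers g
  have hfin : ({N : Subgroup G | IsCyclic ↥N ∧ Subgroup.zpowers g ≤ N}).Finite :=
    Set.toFinite _
  obtain ⟨M, hM, hMmax⟩ := Set.Finite.exists_maximalFor id _ hfin
    ⟨Subgroup.zpowers g, isCyclic_zpowers g, le_refl _⟩
  obtain ⟨hMcyc, hgM⟩ := hM
  obtain ⟨cM, hcM⟩ := exists_zpowers_eq hMcyc
  have hMismax : IsMaxCyclic M := by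
    refine ⟨hMcyc, fun N hN hMN => ?_⟩
    exact le_antisymm hMN (hMmax ⟨hN, le_trans hgM hMN⟩ hMN)
  refine ⟨M, hMismax, ?_⟩
  apply Set.eq_of_subset_of_subset
  · intro z hz
    exact hgM (hUg z hz)
  · intro m hm
    by_contra hmU
    refine hmax ⟨m, fun x hx hNeq => hmU ?_, fun x hx => ?_⟩
    · exact (hUmem m).2 ⟨x, hx, hNeq⟩
    · have hxU : x ∈ U := hSU x hx
      have hxM : x ∈ M := hgM (hUg x hxU)
      have hne : m ≠ x := by
        rintro rfl
        exact hmU hxU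
      refine ⟨hne, ?_⟩
      have hle : Subgroup.closure ({m, x} : Set G) ≤ M := by
        rw [Subgroup.closure_le]
        rintro w (rfl | hw)
        · exact hm
        · rw [Set.mem_singleton_iff] at hw
          rw [hw]
          exact hxM
      exact isCyclic_of_le_zpowers (hcM ▸ hle)
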